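/- arXiv:2203.01585 — 3 statements merged into one kernel-verified Lean document; each statement's English description precedes it below -/
import Mathlib

section
/- Let ρ : g → Der(R/I) be a Lie algebra morphism and let ρ̃ : g → Der(R) be any linear lift such that for every x ∈ g, ρ̃(x)(I) ⊆ I and ρ̃(x) induces ρ(x) on R/I. Then ρ̃ is a weak symmetry action of g on the singular foliation F = I·Der(R): (i) [ρ̃(x), I·Der(R)] ⊆ I·Der(R), and (ii) ρ̃([x,y]) − [ρ̃(x), ρ̃(y)] ∈ I·Der(R) for all x, y ∈ g. Moreover any two such lifts ρ̃, ρ̃' are equivalent, i.e. ρ̃(x) − ρ̃'(x) ∈ I·Der(R) for all x. -/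
section Aux

variable {K : Type} [Field K] {d : ℕ} (I : Ideal (MvPolynomial (Fin d) K))

lemma aux_apply_mem {Z : Derivation K (MvPolynomial (Fin d) K) (MvPolynomial (Fin d) K)}
    (hZ : Z ∈ I • (⊤ : Submodule (MvPolynomial (Fin d) K)
      (Derivation K (MvPolynomial (Fin d) K) (MvPolynomial (Fin d) K))))
    (p : MvPolynomial (Fin d) K) : Z p ∈ I := by
  refine Submodule.smul_induction_on hZ ?_ ?_
  · intro f hf D _
    simpa using I.mul_mem_right (D p) hf
  · intro a b ha hb
    simpa using I.add_mem ha hb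

lemma aux_mem_smul {D : Derivation K (MvPolynomial (Fin d) K) (MvPolynomial (Fin d) K)}
    (h : ∀ j : Fin d, D (MvPolynomial.X j) ∈ I) :
    D ∈ I • (⊤ : Submodule (MvPolynomial (Fin d) K)
      (Derivation K (MvPolynomial (Fin d) K) (MvPolynomial (Fin d) K))) := by
  have hD : D = ∑ j : Fin d, (D (MvPolynomial.X j)) •
      MvPolynomial.mkDerivation K (Pi.single j (1 : MvPolynomial (Fin d) K)) := by
    apply MvPolynomial.derivation_ext
    intro j
    rw [show ⇑(∑ i : Fin d, (D (MvPolynomial.X i)) • MvPolynomial.mkDerivation K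
        (Pi.single i (1 : MvPolynomial (Fin d) K))) = ∑ i : Fin d,
        ⇑((D (MvPolynomial.X i)) • MvPolynomial.mkDerivation K
        (Pi.single i (1 : MvPolynomial (Fin d) K))) from
      map_sum Derivation.coeFnAddMonoidHom _ _]
    simp [MvPolynomial.mkDerivation_X, Pi.single_apply]
  rw [hD]
  exact Submodule.sum_mem _ fun j _ => Submodule.smul_mem_smul (h j) trivial

end Aux

set_option synthInstance.maxHeartbeats 400000 in
/-- Let `ρ : g → Der(R/I)` be a Lie algebra morphism
(`R = K[x₁,…,x_d]`) and `ρ̃, ρ̃' : g → Der(R)` linear lifts (each `ρ̃ x`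
preserves `I` and induces `ρ x` on `R/I`).  Then `ρ̃` is a weak symmetry
action of `g` on `F = I·Der(R)`:
(i) `[ρ̃ x, I·Der(R)] ⊆ I·Der(R)`,
(ii) `ρ̃ [x,y] − [ρ̃ x, ρ̃ y] ∈ I·Der(R)`,
and any two such lifts are equivalent: `ρ̃ x − ρ̃' x ∈ I·Der(R)`. -/
theorem lift_of_action_on_variety_is_weak_symmetry
    (K : Type) [Field K] (d : ℕ)
    (g : Type) [LieRing g] [LieAlgebra K g]
    (I : Ideal (MvPolynomial (Fin d) K))
    (ρ : g →ₗ[K] Derivation K (MvPolynomial (Fin d) K ⧸ I) (MvPolynomial (Fin d) K ⧸ I))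
    (hρ : ∀ x y : g, ρ ⁅x, y⁆ = ⁅ρ x, ρ y⁆)
    (ρ' ρ'' : g →ₗ[K] Derivation K (MvPolynomial (Fin d) K) (MvPolynomial (Fin d) K))
    (hpres : ∀ x : g, ∀ f ∈ I, ρ' x f ∈ I)
    (hind : ∀ (x : g) (f : MvPolynomial (Fin d) K),
      Ideal.Quotient.mk I (ρ' x f) = ρ x (Ideal.Quotient.mk I f))
    (hpres' : ∀ x : g, ∀ f ∈ I, ρ'' x f ∈ I)
    (hind' : ∀ (x : g) (f : MvPolynomial (Fin d) K),
      Ideal.Quotient.mk I (ρ'' x f) = ρ x (Ideal.Quotient.mk I f)) :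
    (∀ x : g, ∀ Z ∈ I • (⊤ : Submodule (MvPolynomial (Fin d) K)
        (Derivation K (MvPolynomial (Fin d) K) (MvPolynomial (Fin d) K))),
      ⁅ρ' x, Z⁆ ∈ I • (⊤ : Submodule (MvPolynomial (Fin d) K)
        (Derivation K (MvPolynomial (Fin d) K) (MvPolynomial (Fin d) K)))) ∧
    (∀ x y : g, ρ' ⁅x, y⁆ - ⁅ρ' x, ρ' y⁆ ∈ I • (⊤ : Submodule (MvPolynomial (Fin d) K)
        (Derivation K (MvPolynomial (Fin d) K) (MvPolynomial (Fin d) K)))) ∧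
    (∀ x : g, ρ' x - ρ'' x ∈ I • (⊤ : Submodule (MvPolynomial (Fin d) K)
        (Derivation K (MvPolynomial (Fin d) K) (MvPolynomial (Fin d) K)))) := by
  refine ⟨?_, ?_, ?_⟩
  · intro x Z hZ
    apply aux_mem_smul
    intro j
    have h1 : Z (MvPolynomial.X j) ∈ I := aux_apply_mem I hZ _
    have h2 : Z (ρ' x (MvPolynomial.X j)) ∈ I := aux_apply_mem I hZ _
    have : (⁅ρ' x, Z⁆ : Derivation K (MvPolynomial (Fin d) K) (MvPolynomial (Fin d) K))
        (MvPolynomial.X j) = ρ' x (Z (MvPolynomial.X j)) - Z (ρ' x (MvPolynomial.X j)) := by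
      simp [Derivation.commutator_apply]
    rw [this]
    exact I.sub_mem (hpres x _ h1) h2
  · intro x y
    apply aux_mem_smul
    intro j
    rw [← Ideal.Quotient.eq_zero_iff_mem]
    have : (ρ' ⁅x, y⁆ - ⁅ρ' x, ρ' y⁆) (MvPolynomial.X j)
        = ρ' ⁅x, y⁆ (MvPolynomial.X j)
          - (ρ' x (ρ' y (MvPolynomial.X j)) - ρ' y (ρ' x (MvPolynomial.X j))) := by
      simp [Derivation.commutator_apply]
    rw [this]
    simp only [map_sub, hind, hρ]
    simp [Derivation.commutator_apply]
  · intro x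
    apply aux_mem_smul
    intro j
    rw [← Ideal.Quotient.eq_zero_iff_mem]
    simp [map_sub, hind, hind']
end

section
/- Let p be a strongly singular point of the ideal I, i.e. X(f) ∈ I_p for every f ∈ I and every derivation X, where I_p is the maximal ideal at p with I ⊆ I_p. Then the Lie bracket of any two elements of F = I·Der(R) lies in I_p·F. In particular, the isotropy Lie algebra F(p)/(I_p·F) of F at p is abelian. -/
lemma smul_bracket_smul (K R : Type) [CommRing K] [CommRing R] [Algebra K R]
    (f g : R) (X Y : Derivation K R R) :
    ⁅f • X, g • Y⁆ = (f * g) • ⁅X, Y⁆ + (f * X g) • Y - (g * Y f) • X := by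
  ext a
  simp only [Derivation.commutator_apply, Derivation.coe_smul, Pi.smul_apply,
    smul_eq_mul, Derivation.leibniz, Derivation.add_apply, Derivation.sub_apply,
    Derivation.smul_apply]
  ring

/-- Let `p` be a strongly singular point of the ideal `I`
(i.e. `X f ∈ I_p` for every `f ∈ I` and every derivation `X`, where `I_p` is
the maximal ideal at `p` containing `I`).  Then the Lie bracket of any two
elements of `F = I·Der(R)` lies in `I_p·F`.  In particular the isotropy Lie
algebra `F(p)/(I_p·F)` is abelian. -/
theorem strongly_singular_isotropy_abelian
    (K R : Type) [CommRing K] [CommRing R] [Algebra K R]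
    (I Ip : Ideal R) (hIp : Ip.IsMaximal) (hle : I ≤ Ip)
    (hss : ∀ f ∈ I, ∀ X : Derivation K R R, X f ∈ Ip) :
    ∀ Z ∈ I • (⊤ : Submodule R (Derivation K R R)),
      ∀ W ∈ I • (⊤ : Submodule R (Derivation K R R)),
        ⁅Z, W⁆ ∈ Ip • (I • (⊤ : Submodule R (Derivation K R R))) := by
  intro Z hZ W hW
  refine Submodule.smul_induction_on hZ ?_ ?_
  · intro f hf X _
    refine Submodule.smul_induction_on hW ?_ ?_
    · intro g hg Y _
      rw [smul_bracket_smul]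
      have h1 : (f * g) • ⁅X, Y⁆ ∈ Ip • (I • (⊤ : Submodule R (Derivation K R R))) := by
        rw [mul_smul]
        exact Submodule.smul_mem_smul (hle hf)
          (Submodule.smul_mem_smul hg trivial)
      have h2 : (f * X g) • Y ∈ Ip • (I • (⊤ : Submodule R (Derivation K R R))) := by
        rw [mul_comm, mul_smul]
        exact Submodule.smul_mem_smul (hss g hg X)
          (Submodule.smul_mem_smul hf trivial)
      have h3 : (g * Y f) • X ∈ Ip • (I • (⊤ : Submodule R (Derivation K R R))) := by
        rw [mul_comm, mul_smul]
        exact Submodule.smul_mem_smul (hss f hf Y)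
          (Submodule.smul_mem_smul hg trivial)
      exact sub_mem (add_mem h1 h2) h3
    · intro W1 W2 h1 h2
      rw [lie_add]
      exact add_mem h1 h2
  · intro Z1 Z2 h1 h2
    rw [add_lie]
    exact add_mem h1 h2
end

section
/- Projection of a weak symmetry action to the leaf space is strict: with π : R_N → R_M injective, if ρ̃ : g → Der(R_M) is a weak symmetry action of g on K_π = {W : W(π(R_N)) = 0} such that each ρ̃(x) is π-projectable onto some ρ(x) ∈ Der(R_N), then x ↦ ρ(x) is a Lie algebra morphism g → Der(R_N). -/
/-- Projection of a weak symmetry action to the leaf space is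
strict: with `π : R_N → R_M` injective, if `ρ̃ : g → Der(R_M)` is a weak
symmetry action of `g` on `K_π = {W : W(π(R_N)) = 0}` such that each `ρ̃ x`
is `π`-projectable onto `ρ x ∈ Der(R_N)`, then `x ↦ ρ x` is a Lie algebra
morphism `g → Der(R_N)`. -/
theorem projected_action_is_strict
    (K RN RM : Type) [CommRing K] [CommRing RN] [CommRing RM]
    [Algebra K RN] [Algebra K RM]
    (π : RN →ₐ[K] RM) (hπ : Function.Injective π)
    (g : Type) [LieRing g] [LieAlgebra K g]
    (ρ' : g →ₗ[K] Derivation K RM RM)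
    (ρ : g → Derivation K RN RN)
    (hproj : ∀ (x : g) (f : RN), ρ' x (π f) = π (ρ x f))
    (hweak1 : ∀ x : g, ∀ W : Derivation K RM RM, (∀ f : RN, W (π f) = 0) →
      ∀ f : RN, ⁅ρ' x, W⁆ (π f) = 0)
    (hweak2 : ∀ (x y : g) (f : RN), (ρ' ⁅x, y⁆ - ⁅ρ' x, ρ' y⁆) (π f) = 0) :
    (∀ x y : g, ρ (x + y) = ρ x + ρ y) ∧
    (∀ (c : K) (x : g), ρ (c • x) = c • ρ x) ∧
    (∀ x y : g, ρ ⁅x, y⁆ = ⁅ρ x, ρ y⁆) := by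
  refine ⟨?_, ?_, ?_⟩
  · intro x y
    ext f
    apply hπ
    have := hproj (x + y) f
    rw [map_add ρ'] at this
    simp only [Derivation.add_apply] at this ⊢
    rw [← this, hproj, hproj, map_add]
  · intro c x
    ext f
    apply hπ
    have := hproj (c • x) f
    rw [map_smul ρ'] at this
    simp only [Derivation.smul_apply] at this ⊢
    rw [← this, hproj, map_smul]
  · intro x y
    ext f
    apply hπ
    have h2 := hweak2 x y f
    rw [Derivation.sub_apply, sub_eq_zero] at h2
    rw [← hproj, h2]
    simp only [Derivation.commutator_apply]
    rw [hproj y f, hproj x (ρ y f), hproj x f, hproj y (ρ x f), ← map_sub]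
end
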